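/- (Weak twisted associativity) Let V be an (r+1)-toroidal vertex algebra, σ an automorphism of V with σ^N = 1, and (W, Y_W) a σ-twisted V-module. Then for u ∈ V^s (0 ≤ s < N), v ∈ V, and w ∈ W, there exists a nonnegative integer ℓ such that (z_0+y_0)^{ℓ+s/N} Y_W(u;z_0+y_0,zy) Y_W(v;y_0,y) w = (y_0+z_0)^{ℓ+s/N} Y_W(Y(u;z_0,z)v;y_0,y) w, where (z_0+y_0)^α is expanded in nonnegative integer powers of y_0, (y_0+z_0)^α is expanded in nonnegative integer powers of z_0, and Y_W(u;z_0+y_0,zy) denotes the substitution x_0 = z_0+y_0 in Y_W(u;x_0,zy) with negative powers of x_0 expanded in nonnegative integer powers of y_0. -/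

import Mathlib

open scoped BigOperators

attribute [local instance] Classical.propDecidable

noncomputable section

/-- Generalized binomial coefficient `C(q, i)` for a rational `q`:
`q(q-1)⋯(q-i+1)/i!`. -/
def qchoose (q : ℚ) (i : ℕ) : ℚ := (descPochhammer ℚ i).eval q / (Nat.factorial i : ℚ)

/-- `C(q, i)` as a complex scalar. -/
def binomC (q : ℚ) (i : ℕ) : ℂ := (qchoose q i : ℂ)

/-- `ω_N = exp(2π√-1/N)`, the principal primitive `N`-th root of unity. -/
def rtu (N : ℕ) : ℂ := Complex.exp (2 * Real.pi * Complex.I / (N : ℂ))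

/-- An `(r+1)`-toroidal vertex algebra, encoded through the mode operators
`v_{m₀,m}` of the vertex operator map
`Y(v;x₀,x) = ∑ v_{m₀,m} x₀^{-m₀-1} x^{-m}`.  The axioms are the
coefficient-wise versions of the vacuum, creation and Jacobi identity
axioms. -/
structure ToroidalVA (r : ℕ) (V : Type) [AddCommGroup V] [Module ℂ V] where
  /-- the mode maps `v ↦ v_{m₀,m}` -/
  Y : V →ₗ[ℂ] (ℤ → (Fin r → ℤ) → Module.End ℂ V)
  /-- the vacuum vector `𝟏` -/
  vac : V
  /-- lower truncation: `Y` maps into `E(V,r) = Hom(V, V[[x₁^{±1},…]]((x₀)))` -/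
  trunc : ∀ u v : V, ∃ M : ℤ, ∀ m0 : ℤ, M ≤ m0 → ∀ m : Fin r → ℤ, Y u m0 m v = 0
  /-- `Y(𝟏;x₀,x)v = v` -/
  vac_act : ∀ (v : V) (m0 : ℤ) (m : Fin r → ℤ),
    Y vac m0 m v = if m0 = -1 ∧ m = 0 then v else 0
  /-- `Y(v;x₀,x)𝟏 ∈ V[[x₀,x₁^{±1},…,x_r^{±1}]]` -/
  creation : ∀ (v : V) (m0 : ℤ) (m : Fin r → ℤ), 0 ≤ m0 → Y v m0 m vac = 0
  /-- the Jacobi identity, written out in components -/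
  jacobi : ∀ (u v w : V) (m0 n0 k0 : ℤ) (p q : Fin r → ℤ),
    (∑ᶠ i : ℕ, ((-1 : ℂ) ^ i * binomC (k0 : ℚ) i) •
      (Y u (m0 + k0 - i) p (Y v (n0 + i) (q - p) w)
        - ((-1 : ℂ) ^ (k0 : ℤ)) • Y v (n0 + k0 - i) (q - p) (Y u (m0 + i) p w)))
    = ∑ᶠ i : ℕ, binomC (m0 : ℚ) i • Y (Y u (k0 + i) p v) (m0 + n0 - i) q w

/-- An automorphism of an `(r+1)`-toroidal vertex algebra: a bijective linear
map fixing the vacuum and intertwining all mode operators. -/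
def ToroidalVA.IsAut {r : ℕ} {V : Type} [AddCommGroup V] [Module ℂ V]
    (T : ToroidalVA r V) (σ : Module.End ℂ V) : Prop :=
  Function.Bijective σ ∧ σ T.vac = T.vac ∧
    ∀ (u v : V) (m0 : ℤ) (m : Fin r → ℤ), σ (T.Y u m0 m v) = T.Y (σ u) m0 m (σ v)

/-- A `σ`-twisted module for an `(r+1)`-toroidal vertex algebra `V` (with `σ`
an automorphism of period `N`), encoded through the mode operators
`v_{m₀,m}` (`m₀ ∈ (1/N)ℤ`) of `Y_W(v;x₀,x) = ∑ v_{m₀,m} x₀^{-m₀-1} x^{-m}`.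
The twisted Jacobi identity is recorded in its coefficient-wise form, for
`σ`-eigenvectors `u ∈ V^s` (which is equivalent to the usual formulation by
linearity, since `V = ⊕ V^s`). -/
structure TwistedModule (r N : ℕ) {V : Type} [AddCommGroup V] [Module ℂ V]
    (T : ToroidalVA r V) (σ : Module.End ℂ V)
    (W : Type) [AddCommGroup W] [Module ℂ W] where
  /-- the twisted mode maps `v ↦ v_{m₀,m}` -/
  Yw : V →ₗ[ℂ] (ℚ → (Fin r → ℤ) → Module.End ℂ W)
  /-- modes are supported on `m₀ ∈ (1/N)ℤ` -/
  frac : ∀ (u : V) (m0 : ℚ) (m : Fin r → ℤ),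
    (∀ t : ℤ, m0 ≠ (t : ℚ) / (N : ℚ)) → Yw u m0 m = 0
  /-- lower truncation: `Y_W` maps into `E(W,r;N)` -/
  trunc : ∀ (u : V) (w : W), ∃ M : ℚ, ∀ m0 : ℚ, M ≤ m0 → ∀ m : Fin r → ℤ,
    Yw u m0 m w = 0
  /-- `Y_W(𝟏;x₀,x) = 1_W` -/
  vac_act : ∀ (m0 : ℚ) (m : Fin r → ℤ),
    Yw T.vac m0 m = if m0 = -1 ∧ m = 0 then 1 else 0
  /-- the twisted Jacobi identity in components, for `u ∈ V^s` -/
  jacobi : ∀ (u : V) (s : ℕ), s < N → σ u = (rtu N) ^ s • u →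
    ∀ (v : V) (w : W) (m0 n0 : ℚ) (k0 : ℤ) (p q : Fin r → ℤ),
    (∑ᶠ i : ℕ, ((-1 : ℂ) ^ i * binomC (k0 : ℚ) i) •
      (Yw u (m0 + k0 - i) p (Yw v (n0 + i) (q - p) w)
        - ((-1 : ℂ) ^ (k0 : ℤ)) • Yw v (n0 + k0 - i) (q - p) (Yw u (m0 + i) p w)))
    = if ∃ t : ℤ, m0 = (s : ℚ) / (N : ℚ) + (t : ℚ) then
        ∑ᶠ i : ℕ, binomC m0 i • Yw (T.Y u (k0 + i) p v) (m0 + n0 - i) q w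
      else 0

lemma double_finsum_eq {W : Type} [AddCommGroup W] [Module ℂ W]
    (c : ℕ → ℕ → ℂ) (X : ℕ → W) (D : ℕ) (hX : ∀ n, D ≤ n → X n = 0) :
    (∑ᶠ i : ℕ, ∑ᶠ j : ℕ, c i j • X (i + j))
      = ∑ n ∈ Finset.range D, (∑ ij ∈ Finset.HasAntidiagonal.antidiagonal n, c ij.1 ij.2) • X n := by
  have hv : ∀ i j : ℕ, D ≤ i + j → c i j • X (i + j) = 0 := fun i j h => by
    rw [hX _ h, smul_zero]
  have hrow : ∀ i : ℕ, (∑ᶠ j : ℕ, c i j • X (i + j)) = ∑ j ∈ Finset.range D, c i j • X (i + j) := by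
    intro i
    apply finsum_eq_finset_sum_of_support_subset
    intro j hj
    simp only [Function.mem_support] at hj
    simp only [Finset.coe_range, Set.mem_Iio]
    by_contra hc
    exact hj (hv i j (le_trans (Nat.le_of_not_lt hc) (Nat.le_add_left j i)))
  rw [finsum_congr hrow,
    finsum_eq_finset_sum_of_support_subset _ (s := Finset.range D) ?hsupp]
  case hsupp =>
    intro i hi
    simp only [Function.mem_support] at hi
    simp only [Finset.coe_range, Set.mem_Iio]
    by_contra hc
    apply hi
    apply Finset.sum_eq_zero
    intro j _
    exact hv i j (le_trans (Nat.le_of_not_lt hc) (Nat.le_add_right i j))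
  rw [← Finset.sum_product']
  have hR : ∀ n ∈ Finset.range D, (∑ ij ∈ Finset.HasAntidiagonal.antidiagonal n, c ij.1 ij.2) • X n
      = ∑ ij ∈ Finset.HasAntidiagonal.antidiagonal n, c ij.1 ij.2 • X (ij.1 + ij.2) := by
    intro n _
    rw [Finset.sum_smul]
    refine Finset.sum_congr rfl fun ij hij => ?_
    rw [Finset.HasAntidiagonal.mem_antidiagonal.mp hij]
  rw [Finset.sum_congr rfl hR]
  have hdisj : (↑(Finset.range D) : Set ℕ).PairwiseDisjoint Finset.HasAntidiagonal.antidiagonal := by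
    intro a _ b _ hab
    simp only [Function.onFun, Finset.disjoint_left]
    intro ij h1 h2
    exact hab ((Finset.HasAntidiagonal.mem_antidiagonal.mp h1).symm.trans (Finset.HasAntidiagonal.mem_antidiagonal.mp h2))
  rw [← Finset.sum_biUnion hdisj]
  refine (Finset.sum_subset ?_ ?_).symm
  · intro ij hij
    obtain ⟨n, hn, hmem⟩ := Finset.mem_biUnion.mp hij
    have h1 := Finset.HasAntidiagonal.antidiagonal.fst_le hmem
    have h2 := Finset.HasAntidiagonal.antidiagonal.snd_le hmem
    simp only [Finset.mem_range] at hn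
    simp only [Finset.mem_product, Finset.mem_range]
    omega
  · intro ij _ hij
    apply hv
    by_contra hc
    apply hij
    apply Finset.mem_biUnion.mpr
    exact ⟨ij.1 + ij.2, Finset.mem_range.mpr (Nat.lt_of_not_le hc), Finset.HasAntidiagonal.mem_antidiagonal.mpr rfl⟩


end

noncomputable section

lemma binomC_zero (q : ℚ) : binomC q 0 = 1 := by simp [binomC, qchoose]

lemma qchoose_add (a b : ℚ) (n : ℕ) :
    qchoose (a + b) n = ∑ ij ∈ Finset.HasAntidiagonal.antidiagonal n, qchoose a ij.1 * qchoose b ij.2 := by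
  have hc : ∀ (q : ℚ) (m : ℕ), qchoose q m = Ring.choose q m := by
    intro q m
    have h1 : (descPochhammer ℚ m).eval q = (descPochhammer ℤ m).smeval q := by
      rw [← Polynomial.aeval_eq_smeval, Polynomial.aeval_def, ← Polynomial.eval_map,
        descPochhammer_map]
    have h2 := Ring.descPochhammer_eq_factorial_smul_choose (R := ℚ) q m
    rw [qchoose, h1, h2, nsmul_eq_mul, mul_div_cancel_left₀]
    exact_mod_cast Nat.factorial_ne_zero m
  simp only [hc]
  exact Ring.add_choose_eq n (Commute.all a b)

lemma descPochhammer_reflect (x : ℚ) (n : ℕ) :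
    (descPochhammer ℚ n).eval (x + n) = (-1 : ℚ)^n * (descPochhammer ℚ n).eval (-1 - x) := by
  induction n with
  | zero => simp
  | succ n ih =>
    conv_lhs => rw [descPochhammer_succ_left]
    conv_rhs => rw [descPochhammer_succ_right]
    simp only [Polynomial.eval_mul, Polynomial.eval_comp, Polynomial.eval_sub,
      Polynomial.eval_X, Polynomial.eval_one, Polynomial.eval_natCast]
    have h : (x + ((n : ℚ) + 1)) - 1 = x + n := by ring
    push_cast
    rw [h, ih]
    ring

lemma qchoose_reflect (x : ℚ) (n : ℕ) :
    qchoose (x + n) n = (-1 : ℚ)^n * qchoose (-1 - x) n := by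
  rw [qchoose, qchoose, descPochhammer_reflect]
  ring

lemma key_coeffC (q0 Z : ℚ) (Z' : ℤ) (hZ : Z = (Z' : ℚ)) (n : ℕ) :
    (∑ ij ∈ Finset.HasAntidiagonal.antidiagonal n, binomC q0 ij.1 * binomC (Z + n - q0) ij.2)
      = (-1 : ℂ)^n * binomC ((-1 - Z' : ℤ) : ℚ) n := by
  have hq : (∑ ij ∈ Finset.HasAntidiagonal.antidiagonal n, qchoose q0 ij.1 * qchoose (Z + n - q0) ij.2)
      = (-1 : ℚ)^n * qchoose ((-1 - Z' : ℤ) : ℚ) n := by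
    rw [← qchoose_add]
    have h1 : q0 + (Z + n - q0) = (Z' : ℚ) + n := by rw [hZ]; ring
    have h2 : ((-1 - Z' : ℤ) : ℚ) = -1 - (Z' : ℚ) := by push_cast; ring
    rw [h1, h2, qchoose_reflect]
  simp only [binomC, ← Rat.cast_mul, ← Rat.cast_sum, hq]
  push_cast
  ring

/-- Modes of an eigenvector `u ∈ V^s` are supported on `s/N + ℤ`. -/
lemma Yw_eigen_support {r N : ℕ} {V : Type} [AddCommGroup V] [Module ℂ V]
    {T : ToroidalVA r V} {σ : Module.End ℂ V}
    {W : Type} [AddCommGroup W] [Module ℂ W]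
    (M : TwistedModule r N T σ W)
    (u : V) (s : ℕ) (hs : s < N) (hu : σ u = (rtu N) ^ s • u)
    (m0 : ℚ) (p : Fin r → ℤ) (w : W)
    (h : ¬ ∃ t : ℤ, m0 = (s : ℚ) / (N : ℚ) + (t : ℚ)) :
    M.Yw u m0 p w = 0 := by
  have hj := M.jacobi u s hs hu T.vac w (m0 + 1) (-1) (-1) p p
  rw [if_neg] at hj
  swap
  · rintro ⟨t, ht⟩
    refine h ⟨t - 1, ?_⟩
    push_cast at ht ⊢
    linarith
  rw [finsum_eq_single _ 0] at hj
  · have e1 : (-1 : ℚ) + ((0:ℕ):ℚ) = -1 ∧ p - p = (0 : Fin r → ℤ) := by constructor <;> simp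
    have e2 : ¬((-1 : ℚ) + ((-1:ℤ):ℚ) - ((0:ℕ):ℚ) = -1 ∧ p - p = (0 : Fin r → ℤ)) := by
      rintro ⟨hc, -⟩
      push_cast at hc
      linarith
    rw [M.vac_act, M.vac_act, if_pos e1, if_neg e2] at hj
    have e3 : m0 + 1 + ((-1 : ℤ) : ℚ) - ((0:ℕ):ℚ) = m0 := by push_cast; ring
    simp only [e3, Module.End.one_apply, LinearMap.zero_apply, smul_zero, sub_zero,
      pow_zero, one_mul, binomC_zero, one_smul] at hj
    exact hj
  · intro i hi
    have h1 : ¬((-1 : ℚ) + (i:ℚ) = -1 ∧ p - p = (0 : Fin r → ℤ)) := by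
      rintro ⟨h1, -⟩
      apply hi
      have : (i:ℚ) = 0 := by linarith
      exact_mod_cast this
    have h2 : ¬((-1 : ℚ) + ((-1:ℤ):ℚ) - (i:ℚ) = -1 ∧ p - p = (0 : Fin r → ℤ)) := by
      rintro ⟨h2, -⟩
      push_cast at h2
      have h3 : (0:ℚ) ≤ (i:ℚ) := Nat.cast_nonneg i
      linarith
    rw [M.vac_act, M.vac_act, if_neg h1, if_neg h2]
    simp

end

noncomputable section

/-- (Weak twisted associativity.)  For `u ∈ V^s`
(`0 ≤ s < N`), `v ∈ V`, `w ∈ W`, there exists `ℓ ∈ ℕ` with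
`(z₀+y₀)^{ℓ+s/N} Y_W(u;z₀+y₀,zy) Y_W(v;y₀,y) w
  = (y₀+z₀)^{ℓ+s/N} Y_W(Y(u;z₀,z)v;y₀,y) w`,
written out in coefficients: for every `Z, B : ℚ`, the coefficient of
`z₀^{Z} y₀^{-B-1} z^{-p} y^{-q}` of the left-hand side (where
`(z₀+y₀)^{ℓ+s/N}` and the substituted powers of `x₀ = z₀+y₀` are expanded in
nonnegative integer powers of `y₀`) equals that of the right-hand side
(where `(y₀+z₀)^{ℓ+s/N}` is expanded in nonnegative integer powers of `z₀`;
the inner sum over `k : ℤ` localizes `z₀^{-k-1}` against the remaining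
`z₀`-exponent and vanishes unless `Z ∈ ℤ`). -/
theorem twisted_weak_associativity
    {r N : ℕ} (hr : 0 < r) (hN : 0 < N)
    {V : Type} [AddCommGroup V] [Module ℂ V]
    (T : ToroidalVA r V) (σ : Module.End ℂ V)
    (haut : T.IsAut σ) (hper : σ ^ N = 1)
    {W : Type} [AddCommGroup W] [Module ℂ W]
    (M : TwistedModule r N T σ W)
    (u : V) (s : ℕ) (hs : s < N) (hu : σ u = (rtu N) ^ s • u)
    (v : V) (w : W) :
    ∃ l : ℕ, ∀ (Z B : ℚ) (p q : Fin r → ℤ),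
      (∑ᶠ i : ℕ, ∑ᶠ j : ℕ,
        (binomC ((l : ℚ) + (s : ℚ) / (N : ℚ)) i
          * binomC (Z + i + j - (l : ℚ) - (s : ℚ) / (N : ℚ)) j) •
          M.Yw u ((l : ℚ) + (s : ℚ) / (N : ℚ) - 1 - Z - i - j) p
            (M.Yw v (B + i + j) (q - p) w))
      = ∑ᶠ i : ℕ, ∑ᶠ k : ℤ,
          (if (k : ℚ) = (i : ℚ) - Z - 1
            then binomC ((l : ℚ) + (s : ℚ) / (N : ℚ)) i else 0) •
            M.Yw (T.Y u k p v) ((l : ℚ) + (s : ℚ) / (N : ℚ) + B - i) q w := by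
  classical
  obtain ⟨Mu, hMu⟩ := M.trunc u w
  obtain ⟨Mv, hMv⟩ := M.trunc v w
  refine ⟨(max 0 ⌈Mu⌉).toNat, ?_⟩
  set l : ℕ := (max 0 ⌈Mu⌉).toNat with hldef
  have hsN : (0:ℚ) ≤ (s:ℚ)/(N:ℚ) := by positivity
  have hlM : Mu ≤ (l:ℚ) := by
    have h0 : Mu ≤ ((max 0 ⌈Mu⌉ : ℤ) : ℚ) :=
      le_trans (Int.le_ceil Mu) (by exact_mod_cast le_max_right 0 ⌈Mu⌉)
    have h1 : ((max 0 ⌈Mu⌉ : ℤ) : ℚ) = ((l:ℤ) : ℚ) := by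
      rw [hldef, Int.toNat_of_nonneg (le_max_left 0 ⌈Mu⌉)]
    rw [h1] at h0
    exact_mod_cast h0
  intro Z B p q
  set q0 : ℚ := (l:ℚ) + (s:ℚ)/(N:ℚ) with hq0
  have hq0M : Mu ≤ q0 := by rw [hq0]; linarith
  by_cases hZ : ∃ t : ℤ, Z = (t : ℚ)
  · obtain ⟨Z', hZ'⟩ := hZ
    set D : ℕ := (max 0 ⌈Mv - B⌉).toNat with hDdef
    have hDv : ∀ n : ℕ, D ≤ n → Mv ≤ B + (n:ℚ) := by
      intro n hn
      have h1 : ((max 0 ⌈Mv - B⌉ : ℤ) : ℚ) = ((D:ℤ) : ℚ) := by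
        rw [hDdef, Int.toNat_of_nonneg (le_max_left 0 ⌈Mv - B⌉)]
      have h2 : Mv - B ≤ ((max 0 ⌈Mv - B⌉ : ℤ):ℚ) :=
        le_trans (Int.le_ceil _) (by exact_mod_cast le_max_right 0 ⌈Mv - B⌉)
      rw [h1] at h2
      have h3 : ((D:ℤ):ℚ) ≤ (n:ℚ) := by exact_mod_cast hn
      linarith
    have hXvan : ∀ n : ℕ, D ≤ n →
        M.Yw u (q0 - 1 - Z - (n:ℚ)) p (M.Yw v (B + (n:ℚ)) (q - p) w) = 0 := by
      intro n hn
      rw [hMv _ (hDv n hn), map_zero]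
    trans (∑ n ∈ Finset.range D, ((-1:ℂ)^n * binomC ((-1 - Z' : ℤ):ℚ) n) •
        M.Yw u (q0 - 1 - Z - (n:ℚ)) p (M.Yw v (B + (n:ℚ)) (q - p) w))
    · calc (∑ᶠ i : ℕ, ∑ᶠ j : ℕ,
            (binomC q0 i * binomC (Z + (i:ℚ) + (j:ℚ) - (l:ℚ) - (s:ℚ)/(N:ℚ)) j) •
            M.Yw u (q0 - 1 - Z - (i:ℚ) - (j:ℚ)) p (M.Yw v (B + (i:ℚ) + (j:ℚ)) (q - p) w))
          = ∑ᶠ i : ℕ, ∑ᶠ j : ℕ,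
            (binomC q0 i * binomC (Z + (i:ℚ) + (j:ℚ) - (l:ℚ) - (s:ℚ)/(N:ℚ)) j) •
            M.Yw u (q0 - 1 - Z - ((i + j : ℕ):ℚ)) p
              (M.Yw v (B + ((i + j : ℕ):ℚ)) (q - p) w) := by
            refine finsum_congr fun i => finsum_congr fun j => ?_
            have e1 : q0 - 1 - Z - (i:ℚ) - (j:ℚ) = q0 - 1 - Z - (((i+j:ℕ)):ℚ) := by
              push_cast; ring
            have e2 : B + (i:ℚ) + (j:ℚ) = B + (((i+j:ℕ)):ℚ) := by push_cast; ring
            rw [e1, e2]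
        _ = ∑ n ∈ Finset.range D, (∑ ij ∈ Finset.HasAntidiagonal.antidiagonal n,
              binomC q0 ij.1 * binomC (Z + (ij.1:ℚ) + (ij.2:ℚ) - (l:ℚ) - (s:ℚ)/(N:ℚ)) ij.2) •
              M.Yw u (q0 - 1 - Z - (n:ℚ)) p (M.Yw v (B + (n:ℚ)) (q - p) w) :=
            double_finsum_eq _
              (fun n : ℕ => M.Yw u (q0 - 1 - Z - (n:ℚ)) p (M.Yw v (B + (n:ℚ)) (q - p) w))
              D hXvan
        _ = ∑ n ∈ Finset.range D, ((-1:ℂ)^n * binomC ((-1 - Z' : ℤ):ℚ) n) •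
              M.Yw u (q0 - 1 - Z - (n:ℚ)) p (M.Yw v (B + (n:ℚ)) (q - p) w) := by
            refine Finset.sum_congr rfl fun n _ => ?_
            congr 1
            have hc : ∀ ij ∈ Finset.HasAntidiagonal.antidiagonal n,
                binomC q0 ij.1 * binomC (Z + (ij.1:ℚ) + (ij.2:ℚ) - (l:ℚ) - (s:ℚ)/(N:ℚ)) ij.2
                  = binomC q0 ij.1 * binomC (Z + (n:ℚ) - q0) ij.2 := by
              intro ij hij
              have hsum : ij.1 + ij.2 = n := Finset.HasAntidiagonal.mem_antidiagonal.mp hij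
              have he : Z + (ij.1:ℚ) + (ij.2:ℚ) - (l:ℚ) - (s:ℚ)/(N:ℚ) = Z + (n:ℚ) - q0 := by
                rw [hq0, ← hsum]; push_cast; ring
              rw [he]
            rw [Finset.sum_congr rfl hc, key_coeffC q0 Z Z' hZ' n]
    · have hj := M.jacobi u s hs hu v w q0 B (-1 - Z') p q
      rw [if_pos ⟨(l:ℤ), by rw [hq0]; push_cast; ring⟩] at hj
      have hzero2 : ∀ n : ℕ, M.Yw u (q0 + (n:ℚ)) p w = 0 := by
        intro n
        apply hMu
        have : (0:ℚ) ≤ (n:ℚ) := Nat.cast_nonneg n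
        linarith
      have hexp : ∀ n : ℕ, q0 + ((-1 - Z' : ℤ):ℚ) - (n:ℚ) = q0 - 1 - Z - (n:ℚ) := by
        intro n; rw [hZ']; push_cast; ring
      simp only [hzero2, map_zero, smul_zero, sub_zero, hexp] at hj
      calc (∑ n ∈ Finset.range D, ((-1:ℂ)^n * binomC ((-1 - Z' : ℤ):ℚ) n) •
            M.Yw u (q0 - 1 - Z - (n:ℚ)) p (M.Yw v (B + (n:ℚ)) (q - p) w))
          = ∑ᶠ n : ℕ, ((-1:ℂ)^n * binomC ((-1 - Z' : ℤ):ℚ) n) •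
            M.Yw u (q0 - 1 - Z - (n:ℚ)) p (M.Yw v (B + (n:ℚ)) (q - p) w) := by
            refine (finsum_eq_finset_sum_of_support_subset _ ?_).symm
            intro n hn
            simp only [Function.mem_support] at hn
            simp only [Finset.coe_range, Set.mem_Iio]
            by_contra hcon
            exact hn (by rw [hXvan n (Nat.le_of_not_lt hcon), smul_zero])
        _ = ∑ᶠ i : ℕ, binomC q0 i •
              M.Yw (T.Y u (-1 - Z' + (i:ℤ)) p v) (q0 + B - (i:ℚ)) q w := hj
        _ = ∑ᶠ i : ℕ, ∑ᶠ k : ℤ,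
              (if (k : ℚ) = (i:ℚ) - Z - 1 then binomC q0 i else 0) •
              M.Yw (T.Y u k p v) (q0 + B - (i:ℚ)) q w := by
            refine finsum_congr fun i => Eq.symm ?_
            have ha : ∀ k : ℤ, k ≠ -1 - Z' + (i:ℤ) →
                (if (k : ℚ) = (i:ℚ) - Z - 1 then binomC q0 i else 0) •
                  M.Yw (T.Y u k p v) (q0 + B - (i:ℚ)) q w = 0 := by
              intro k hk
              rw [if_neg, zero_smul]
              intro hcon
              apply hk
              have hcast : (k:ℚ) = ((-1 - Z' + (i:ℤ) : ℤ) : ℚ) := by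
                rw [hZ'] at hcon; push_cast at hcon ⊢; linarith
              exact_mod_cast hcast
            rw [finsum_eq_single _ (-1 - Z' + (i:ℤ)) ha,
              if_pos (by rw [hZ']; push_cast; ring)]
  · trans (0:W)
    · apply finsum_eq_zero_of_forall_eq_zero
      intro i
      apply finsum_eq_zero_of_forall_eq_zero
      intro j
      have h0 : M.Yw u (q0 - 1 - Z - (i:ℚ) - (j:ℚ)) p (M.Yw v (B + (i:ℚ) + (j:ℚ)) (q - p) w)
          = 0 := by
        apply Yw_eigen_support M u s hs hu
        rintro ⟨t, ht⟩
        refine hZ ⟨(l:ℤ) - 1 - (i:ℤ) - (j:ℤ) - t, ?_⟩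
        rw [hq0] at ht
        push_cast at ht ⊢
        linarith
      rw [h0, smul_zero]
    · symm
      apply finsum_eq_zero_of_forall_eq_zero
      intro i
      apply finsum_eq_zero_of_forall_eq_zero
      intro k
      have hcnot : ¬((k:ℚ) = (i:ℚ) - Z - 1) := by
        intro hc
        refine hZ ⟨(i:ℤ) - 1 - k, ?_⟩
        push_cast
        linarith
      rw [if_neg hcnot, zero_smul]


end
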